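/- Fix $L_0, L_1 > 0$ and $\Delta_1 > 0$. Let $f(w) = \frac{L_0}{L_1^2} e^{L_1 w - 1}$ for $w \ge 1/L_1$ (extended as in the counterexample $f_1$ elsewhere), and let the stochastic gradient oracle be $g = f'(w) + z$ where $z$ has density proportional to $e^{-\sqrt{|z|}/c}$ for some constant $c > 0$. Then for any starting point $w_t \ge 1/L_1$, any learning rate $\eta > 0$, any momentum coefficient $\beta \in [0,1)$, and any momentum value $m_{t-1} \in \mathbb{R}$, the SGDM update $w_{t+1} = w_t - \eta(\beta m_{t-1} + (1-\beta)(f'(w_t) + z))$ satisfies $\mathbb{E}_z[|f'(w_{t+1})|] = +\infty$. -/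

import Mathlib

open MeasureTheory

noncomputable def f1 (L0 L1 : ℝ) (x : ℝ) : ℝ :=
  if 1 / L1 ≤ x then L0 / L1 ^ 2 * Real.exp (L1 * x - 1)
  else if x ≤ -(1 / L1) then L0 / L1 ^ 2 * Real.exp (-(L1 * x) - 1)
  else L0 * x ^ 2 / 2 + L0 / (2 * L1 ^ 2)

lemma f1_deriv (L0 L1 : ℝ) {x : ℝ} (hx : 1 / L1 < x) :
    deriv (f1 L0 L1) x = L0 / L1 ^ 2 * (Real.exp (L1 * x - 1) * L1) := by
  have hev : f1 L0 L1 =ᶠ[nhds x] fun y => L0 / L1 ^ 2 * Real.exp (L1 * y - 1) := by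
    filter_upwards [Ioi_mem_nhds hx] with y hy
    unfold f1
    rw [if_pos (Set.mem_Ioi.mp hy).le]
  rw [hev.deriv_eq]
  have h1 : HasDerivAt (fun y : ℝ => L1 * y - 1) L1 x := by
    simpa using ((hasDerivAt_id x).const_mul L1).sub_const 1
  exact (h1.exp.const_mul (L0 / L1 ^ 2)).deriv

theorem sgdm_one_step_divergence (L0 L1 Δ1 c k : ℝ)
    (hL0 : 0 < L0) (hL1 : 0 < L1) (hΔ1 : 0 < Δ1) (hc : 0 < c) (hk : 0 < k)
    (μ : Measure ℝ)
    (hμ : μ = volume.withDensity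
      (fun z => ENNReal.ofReal (k * Real.exp (-(Real.sqrt |z|) / c))))
    (hprob : IsProbabilityMeasure μ)
    (wt η β mprev : ℝ) (hwt : 1 / L1 ≤ wt) (hη : 0 < η) (hβ0 : 0 ≤ β) (hβ1 : β < 1) :
    ∫⁻ z, ENNReal.ofReal
        |deriv (f1 L0 L1)
          (wt - η * (β * mprev + (1 - β) * (deriv (f1 L0 L1) wt + z)))| ∂μ = ⊤ := by
  subst hμ
  set G := deriv (f1 L0 L1) wt with hG
  set b := η * (1 - β) with hb
  have hbpos : 0 < b := mul_pos hη (by linarith)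
  set A := wt - η * (β * mprev + (1 - β) * G) with hA
  have harg : ∀ z : ℝ, wt - η * (β * mprev + (1 - β) * (G + z)) = A - b * z := by
    intro z; rw [hA, hb]; ring
  have hgmeas : Measurable fun z : ℝ =>
      ENNReal.ofReal (k * Real.exp (-(Real.sqrt |z|) / c)) := by
    fun_prop
  rw [lintegral_withDensity_eq_lintegral_mul_non_measurable _ hgmeas
    (Filter.Eventually.of_forall fun z => ENNReal.ofReal_lt_top)]
  set R : ℝ := max ((1 / L1 - A) / b + 1) ((1 / (L1 * b * c)) ^ 2 + 1) with hR
  have hRpos : 0 < R := lt_of_lt_of_le (by positivity) (le_max_right _ _)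
  set ε : ℝ := k * (L0 / L1 * Real.exp (L1 * A - 1)) with hε
  have hεpos : 0 < ε := by positivity
  have hbound : ∀ z ∈ Set.Iic (-R),
      ENNReal.ofReal ε ≤
        ENNReal.ofReal (k * Real.exp (-(Real.sqrt |z|) / c)) *
          ENNReal.ofReal
            |deriv (f1 L0 L1) (wt - η * (β * mprev + (1 - β) * (G + z)))| := by
    intro z hz
    rw [harg z]
    have hzneg : z < 0 := lt_of_le_of_lt hz (by linarith)
    have hzR : z ≤ -R := hz
    have hzarg : 1 / L1 < A - b * z := by
      have h1 : z ≤ -((1 / L1 - A) / b + 1) := by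
        have := le_max_left ((1 / L1 - A) / b + 1) ((1 / (L1 * b * c)) ^ 2 + 1)
        linarith
      have h2 : b * z ≤ b * (-((1 / L1 - A) / b + 1)) :=
        mul_le_mul_of_nonneg_left h1 hbpos.le
      have h3 : b * (-((1 / L1 - A) / b + 1)) = -(1 / L1 - A) - b := by
        field_simp; ring
      nlinarith
    rw [f1_deriv L0 L1 hzarg]
    have habs : |z| = -z := abs_of_neg hzneg
    set s : ℝ := Real.sqrt (-z) with hs
    have hs0 : 0 ≤ s := Real.sqrt_nonneg _
    have hs2 : s ^ 2 = -z := Real.sq_sqrt (by linarith)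
    have hslb : 1 / (L1 * b * c) ≤ s := by
      have hzbig : (1 / (L1 * b * c)) ^ 2 ≤ -z := by
        have := le_max_right ((1 / L1 - A) / b + 1) ((1 / (L1 * b * c)) ^ 2 + 1)
        linarith
      have := Real.sqrt_le_sqrt hzbig
      rwa [Real.sqrt_sq (by positivity)] at this
    have hkey : 0 ≤ L1 * b * (-z) - s / c := by
      have h4 : 1 / c ≤ L1 * b * s := by
        rw [div_le_iff₀ (by positivity)] at hslb
        calc 1 / c = 1 * (1 / c) := by ring
        _ ≤ (s * (L1 * b * c)) * (1/c) := by
          apply mul_le_mul_of_nonneg_right _ (by positivity)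
          linarith
        _ = L1 * b * s := by field_simp
      have : s / c ≤ L1 * b * s * s := by
        rw [div_eq_mul_one_div]
        calc s * (1 / c) ≤ s * (L1 * b * s) := mul_le_mul_of_nonneg_left h4 hs0
        _ = L1 * b * s * s := by ring
      have h6 : L1 * b * s * s = L1 * b * -z := by rw [← hs2]; ring
      linarith
    have hderivpos : 0 ≤ L0 / L1 ^ 2 * (Real.exp (L1 * (A - b * z) - 1) * L1) := by
      positivity
    rw [abs_of_nonneg hderivpos, ← ENNReal.ofReal_mul (by positivity)]
    apply ENNReal.ofReal_le_ofReal
    have hexprw : k * Real.exp (-(Real.sqrt |z|) / c) *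
        (L0 / L1 ^ 2 * (Real.exp (L1 * (A - b * z) - 1) * L1)) =
        k * (L0 / L1) * Real.exp (-(s / c) + (L1 * (A - b * z) - 1)) := by
      rw [habs, Real.exp_add, ← hs]
      field_simp
    rw [hexprw, hε]
    have hexple : Real.exp (L1 * A - 1) ≤ Real.exp (-(s / c) + (L1 * (A - b * z) - 1)) := by
      apply Real.exp_le_exp.mpr
      nlinarith
    have h7 := mul_le_mul_of_nonneg_left hexple
      (show (0:ℝ) ≤ k * (L0 / L1) by positivity)
    linarith
  have hlow : (Set.Iic (-R)).indicator (fun _ : ℝ => ENNReal.ofReal ε) ≤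
      fun z => ENNReal.ofReal (k * Real.exp (-(Real.sqrt |z|) / c)) *
        ENNReal.ofReal
          |deriv (f1 L0 L1) (wt - η * (β * mprev + (1 - β) * (G + z)))| := by
    intro z
    by_cases hz : z ∈ Set.Iic (-R)
    · rw [Set.indicator_of_mem hz]; exact hbound z hz
    · rw [Set.indicator_of_notMem hz]; exact zero_le
  have hIic : (⊤ : ENNReal) = ∫⁻ z, (Set.Iic (-R)).indicator
      (fun _ : ℝ => ENNReal.ofReal ε) z ∂volume := by
    rw [lintegral_indicator measurableSet_Iic _, setLIntegral_const,
      Real.volume_Iic, ENNReal.mul_top]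
    exact (ENNReal.ofReal_pos.mpr hεpos).ne'
  rw [eq_top_iff, hIic]
  exact lintegral_mono hlow
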